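/- Let x = (x_1,…,x_d) be a random vector on a probability space and let Y = f(x) be square-integrable with variance σ². Define val(u) = Var(E[Y | x_u]) for u ⊆ {1,…,d} (where val(∅) = 0 and E[Y|x_u] is the conditional expectation given the σ-algebra generated by (x_j)_{j∈u}). Then the Shapley values φ_j of this game satisfy: (i) φ_j ≥ 0 for every j, and (ii) Σ_{j=1}^d φ_j = σ². -/

import Mathlib

open Finset MeasureTheory ProbabilityTheory
open scoped ENNReal NNReal

/-- The Shapley value of player `j` for the cooperative game `val` on subsets of `Fin d`. -/
noncomputable def shapley {d : ℕ} (val : Finset (Fin d) → ℝ) (j : Fin d) : ℝ :=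
  (d : ℝ)⁻¹ * ∑ u ∈ (Finset.univ.erase j).powerset,
    ((Nat.choose (d - 1) u.card : ℝ))⁻¹ * (val (insert j u) - val u)

/-- The σ-algebra generated by the variables `x j`, `j ∈ u`. -/
def mGen {Ω : Type*} {d : ℕ} (x : Fin d → Ω → ℝ) (u : Finset (Fin d)) :
    MeasurableSpace Ω :=
  ⨆ j ∈ u, MeasurableSpace.comap (x j) Real.measurableSpace

section Aux
variable {Ω : Type*} {m m' m0 : MeasurableSpace Ω} {μ : Measure Ω}


variable {Ω : Type*} {m m' m0 : MeasurableSpace Ω} {μ : Measure Ω}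

lemma my_variance_congr {X Z : Ω → ℝ} (h : X =ᵐ[μ] Z) : variance X μ = variance Z μ := by
  have hI : μ[X] = μ[Z] := integral_congr_ae h
  unfold variance evariance
  rw [hI]
  congr 1
  apply lintegral_congr_ae
  filter_upwards [h] with ω hω
  rw [hω]

lemma my_condexp_ae_eq_condExpL2 [IsProbabilityMeasure μ] (hm : m ≤ m0) {f : Ω → ℝ}
    (hf : MemLp f 2 μ) :
    μ[f|m] =ᵐ[μ] (condExpL2 ℝ ℝ hm (hf.toLp f) : Ω →₂[μ] ℝ) := by
  refine (ae_eq_condExp_of_forall_setIntegral_eq hm (hf.integrable one_le_two)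
    (fun s _ hμs => integrableOn_condExpL2_of_measure_ne_top hm hμs.ne _)
    (fun s hs hμs => ?_) (aestronglyMeasurable_condExpL2 hm _)).symm
  rw [integral_condExpL2_eq hm (hf.toLp f) hs hμs.ne]
  exact setIntegral_congr_ae (hm s hs) ((hf.coeFn_toLp).mono fun x hx _ => hx)

lemma my_memℒp_condexp [IsProbabilityMeasure μ] (hm : m ≤ m0) {f : Ω → ℝ}
    (hf : MemLp f 2 μ) : MemLp (μ[f|m]) 2 μ :=
  (Lp.memLp _).ae_eq (my_condexp_ae_eq_condExpL2 hm hf).symm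

lemma my_eLpNorm_condexp_le [IsProbabilityMeasure μ] (hm : m ≤ m0) {f : Ω → ℝ}
    (hf : MemLp f 2 μ) : eLpNorm (μ[f|m]) 2 μ ≤ eLpNorm f 2 μ := by
  rw [eLpNorm_congr_ae (my_condexp_ae_eq_condExpL2 hm hf),
    ← eLpNorm_congr_ae hf.coeFn_toLp]
  exact eLpNorm_condExpL2_le hm _

lemma my_lintegral_sq {g : Ω → ℝ} (hg : MemLp g 2 μ) :
    ∫⁻ x, (‖g x‖₊ : ℝ≥0∞) ^ (2 : ℝ) ∂μ = ENNReal.ofReal (∫ x, g x ^ 2 ∂μ) := by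
  rw [ofReal_integral_eq_lintegral_ofReal hg.integrable_sq
    (ae_of_all _ fun x => sq_nonneg _)]
  refine lintegral_congr fun x => ?_
  rw [ENNReal.rpow_two, ← ENNReal.coe_pow, ← nnnorm_pow,
    ← Real.toNNReal_eq_nnnorm_of_nonneg (sq_nonneg (g x))]
  rfl

lemma my_integral_sq_le [IsProbabilityMeasure μ] {f g : Ω → ℝ} (hf : MemLp f 2 μ)
    (hg : MemLp g 2 μ) (h : eLpNorm g 2 μ ≤ eLpNorm f 2 μ) :
    ∫ x, g x ^ 2 ∂μ ≤ ∫ x, f x ^ 2 ∂μ := by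
  have h2 : (0:ℝ) < (2:ℝ≥0∞).toReal := by norm_num
  rw [eLpNorm_eq_lintegral_rpow_enorm_toReal (by norm_num) (by norm_num),
    eLpNorm_eq_lintegral_rpow_enorm_toReal (by norm_num) (by norm_num),
    ENNReal.rpow_le_rpow_iff (by positivity)] at h
  rw [← ENNReal.ofReal_le_ofReal_iff (by positivity), ← my_lintegral_sq hf,
    ← my_lintegral_sq hg]
  simpa [enorm_eq_nnnorm] using h

lemma my_variance_condexp_le [IsProbabilityMeasure μ] (hm : m ≤ m0) {f : Ω → ℝ}
    (hf : MemLp f 2 μ) : variance (μ[f|m]) μ ≤ variance f μ := by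
  haveI : SigmaFinite (μ.trim hm) := by infer_instance
  rw [variance_eq_sub (my_memℒp_condexp hm hf), variance_eq_sub hf,
    integral_condExp hm]
  have := my_integral_sq_le hf (my_memℒp_condexp hm hf) (my_eLpNorm_condexp_le hm hf)
  simp only [Pi.pow_apply]
  linarith

lemma my_variance_condexp_mono [IsProbabilityMeasure μ] (hmm' : m ≤ m') (hm' : m' ≤ m0)
    {f : Ω → ℝ} (hf : MemLp f 2 μ) :
    variance (μ[f|m]) μ ≤ variance (μ[f|m']) μ := by
  haveI : SigmaFinite (μ.trim hm') := by infer_instance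
  have h := condExp_condExp_of_le hmm' hm' (f := f) (μ := μ)
  rw [my_variance_congr h.symm]
  exact my_variance_condexp_le (hmm'.trans hm') (my_memℒp_condexp hm' hf)



lemma mGen_le {d : ℕ} {x : Fin d → Ω → ℝ} (hx : ∀ j, Measurable (x j))
    (u : Finset (Fin d)) : mGen x u ≤ m0 :=
  iSup₂_le fun j _ => (hx j).comap_le

lemma mGen_mono {d : ℕ} (x : Fin d → Ω → ℝ) {u v : Finset (Fin d)} (h : u ⊆ v) :
    mGen x u ≤ mGen x v := by
  refine iSup₂_le fun j hj => ?_
  exact le_iSup₂ (f := fun j (_ : j ∈ v) => MeasurableSpace.comap (x j) Real.measurableSpace) j (h hj)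

lemma mGen_empty {d : ℕ} (x : Fin d → Ω → ℝ) : mGen x ∅ = ⊥ := by
  simp [mGen]

lemma my_variance_const [IsProbabilityMeasure μ] (c : ℝ) :
    variance (fun _ : Ω => c) μ = 0 := by
  unfold variance evariance
  simp

lemma coeff_eq {d : ℕ} (hd : 0 < d) (s : Finset (Fin d)) :
    (d : ℝ)⁻¹ * ((s.card : ℝ) * ((d - 1).choose (s.card - 1) : ℝ)⁻¹
      - ((d - s.card : ℕ) : ℝ) * ((d - 1).choose s.card : ℝ)⁻¹)
    = (if s = Finset.univ then 1 else 0) - (if s = (∅ : Finset (Fin d)) then 1 else 0) := by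
  haveI : Nonempty (Fin d) := Fin.pos_iff_nonempty.mp hd
  have hsd : s.card ≤ d := by simpa using Finset.card_le_card (Finset.subset_univ s)
  have hd0 : (d : ℝ) ≠ 0 := Nat.cast_ne_zero.mpr hd.ne'
  rcases Nat.eq_zero_or_pos s.card with hk | hk
  · -- s = ∅
    have hs : s = ∅ := Finset.card_eq_zero.mp hk
    subst hs
    rw [if_neg (Ne.symm Finset.univ_nonempty.ne_empty), if_pos rfl]
    simp only [Finset.card_empty, Nat.choose_zero_right, Nat.sub_zero, Nat.cast_zero, zero_mul,
      Nat.cast_one, inv_one, mul_one, zero_sub]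
    field_simp
  · rcases eq_or_lt_of_le hsd with hketop | hklt
    · -- s = univ
      have hs : s = Finset.univ := Finset.eq_univ_of_card s (by simpa using hketop)
      rw [if_pos hs, if_neg (by rw [hs]; exact Finset.univ_nonempty.ne_empty)]
      rw [hketop, Nat.sub_self, Nat.choose_self]
      field_simp
      simp
    · -- 0 < card < d
      have hne1 : s ≠ ∅ := fun h => by simp [h] at hk
      have hne2 : s ≠ Finset.univ := fun h => by
        rw [h, Finset.card_univ, Fintype.card_fin] at hklt; exact lt_irrefl _ hklt
      rw [if_neg hne2, if_neg hne1, sub_zero]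
      set k := s.card with hkdef
      have hkey : (d - 1).choose k * k = (d - 1).choose (k - 1) * (d - k) := by
        have h := Nat.choose_succ_right_eq (d - 1) (k - 1)
        have e1 : k - 1 + 1 = k := by omega
        have e2 : d - 1 - (k - 1) = d - k := by omega
        rwa [e1, e2] at h
      have h1 : ((d - 1).choose (k - 1) : ℝ) ≠ 0 := by
        exact_mod_cast (Nat.choose_pos (by omega)).ne'
      have h2 : ((d - 1).choose k : ℝ) ≠ 0 := by
        exact_mod_cast (Nat.choose_pos (by omega)).ne'
      have key : (k : ℝ) * ((d - 1).choose (k - 1) : ℝ)⁻¹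
          = ((d - k : ℕ) : ℝ) * ((d - 1).choose k : ℝ)⁻¹ := by
        rw [inv_eq_one_div, inv_eq_one_div, mul_one_div, mul_one_div,
          div_eq_div_iff h1 h2, mul_comm, mul_comm ((d - k : ℕ) : ℝ)]
        exact_mod_cast hkey
      rw [key, sub_self, mul_zero]

lemma shapley_sum {d : ℕ} (hd : 0 < d) (val : Finset (Fin d) → ℝ) :
    ∑ j, shapley val j = val Finset.univ - val ∅ := by
  haveI : Nonempty (Fin d) := Fin.pos_iff_nonempty.mp hd
  unfold shapley
  rw [← Finset.mul_sum]
  have hdom : ∀ j : Fin d, (Finset.univ.erase j).powerset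
      = Finset.univ.powerset.filter (fun u => j ∉ u) := by
    intro j; ext u
    simp [Finset.mem_powerset, Finset.subset_erase, Finset.subset_univ]
  simp_rw [hdom]
  rw [Finset.sum_comm' (t' := Finset.univ.powerset) (s' := fun u => Finset.univ \ u)
    (fun j u => by simp [Finset.mem_filter, Finset.mem_sdiff, and_comm])]
  simp_rw [mul_sub]
  simp_rw [Finset.sum_sub_distrib]
  have hA : ∑ u ∈ Finset.univ.powerset, ∑ j ∈ Finset.univ \ u,
        ((d - 1).choose u.card : ℝ)⁻¹ * val (insert j u)
      = ∑ s ∈ Finset.univ.powerset, ∑ _j ∈ s,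
        ((d - 1).choose (s.card - 1) : ℝ)⁻¹ * val s := by
    rw [Finset.sum_sigma', Finset.sum_sigma']
    refine Finset.sum_bij' (fun p _ => ⟨insert p.2 p.1, p.2⟩)
      (fun q _ => ⟨q.1.erase q.2, q.2⟩) ?_ ?_ ?_ ?_ ?_
    · rintro ⟨u, j⟩ hp
      simp only [Finset.mem_sigma, Finset.mem_powerset, Finset.mem_sdiff] at hp ⊢
      exact ⟨Finset.subset_univ _, Finset.mem_insert_self _ _⟩
    · rintro ⟨s, j⟩ hq
      simp only [Finset.mem_sigma, Finset.mem_powerset, Finset.mem_sdiff] at hq ⊢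
      exact ⟨Finset.subset_univ _, Finset.mem_univ _, Finset.notMem_erase _ _⟩
    · rintro ⟨u, j⟩ hp
      simp only [Finset.mem_sigma, Finset.mem_powerset, Finset.mem_sdiff] at hp
      simp [Finset.erase_insert hp.2.2]
    · rintro ⟨s, j⟩ hq
      simp only [Finset.mem_sigma, Finset.mem_powerset] at hq
      simp [Finset.insert_erase hq.2]
    · rintro ⟨u, j⟩ hp
      simp only [Finset.mem_sigma, Finset.mem_powerset, Finset.mem_sdiff] at hp
      rw [Finset.card_insert_of_notMem hp.2.2, Nat.add_sub_cancel]
  rw [hA]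
  have hB : ∀ s ∈ Finset.univ.powerset, ∑ _j ∈ (Finset.univ \ s),
        ((d - 1).choose s.card : ℝ)⁻¹ * val s
      = ((d - s.card : ℕ) : ℝ) * (((d - 1).choose s.card : ℝ)⁻¹ * val s) := by
    intro s _
    rw [Finset.sum_const, nsmul_eq_mul, Finset.card_univ_diff, Fintype.card_fin]
  rw [Finset.sum_congr rfl hB]
  have hA2 : ∀ s ∈ Finset.univ.powerset, ∑ _j ∈ s,
        ((d - 1).choose (s.card - 1) : ℝ)⁻¹ * val s
      = (s.card : ℝ) * (((d - 1).choose (s.card - 1) : ℝ)⁻¹ * val s) := by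
    intro s _
    rw [Finset.sum_const, nsmul_eq_mul]
  rw [Finset.sum_congr rfl hA2, ← Finset.sum_sub_distrib, Finset.mul_sum]
  have hpt : ∀ s ∈ Finset.univ.powerset,
      (d : ℝ)⁻¹ * ((s.card : ℝ) * (((d - 1).choose (s.card - 1) : ℝ)⁻¹ * val s)
        - ((d - s.card : ℕ) : ℝ) * (((d - 1).choose s.card : ℝ)⁻¹ * val s))
      = (if s = Finset.univ then val s else 0) - (if s = (∅ : Finset (Fin d)) then val s else 0) := by
    intro s _
    have := coeff_eq hd s
    have expand : (d : ℝ)⁻¹ * ((s.card : ℝ) * (((d - 1).choose (s.card - 1) : ℝ)⁻¹ * val s)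
        - ((d - s.card : ℕ) : ℝ) * (((d - 1).choose s.card : ℝ)⁻¹ * val s))
        = ((d : ℝ)⁻¹ * ((s.card : ℝ) * (((d - 1).choose (s.card - 1) : ℝ))⁻¹
          - ((d - s.card : ℕ) : ℝ) * (((d - 1).choose s.card : ℝ))⁻¹)) * val s := by ring
    rw [expand, this]
    split_ifs <;> ring
  rw [Finset.sum_congr rfl hpt, Finset.sum_sub_distrib,
    Finset.sum_ite_eq' _ (Finset.univ : Finset (Fin d)) val,
    Finset.sum_ite_eq' _ (∅ : Finset (Fin d)) val]
  simp

end Aux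

/-- For the game `val u = Var(E[Y ∣ x_u])`, the Shapley values are nonnegative and
sum to the total variance `Var(Y)`. -/
theorem shapley_varexplained_nonneg_and_efficient
    {Ω : Type*} [m0 : MeasurableSpace Ω] (μ : Measure Ω) [IsProbabilityMeasure μ]
    (d : ℕ) (x : Fin d → Ω → ℝ) (hx : ∀ j, Measurable (x j))
    (Y : Ω → ℝ) (hY2 : MemLp Y 2 μ)
    (hYmeas : Measurable[mGen x Finset.univ] Y) :
    (∀ j, 0 ≤ shapley (fun u => variance (μ[Y | mGen x u]) μ) j) ∧
      ∑ j, shapley (fun u => variance (μ[Y | mGen x u]) μ) j = variance Y μ := by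
  set val : Finset (Fin d) → ℝ := fun u => variance (μ[Y | mGen x u]) μ with hval
  have hle : ∀ u, mGen x u ≤ m0 := mGen_le hx
  have hmono : ∀ {u v : Finset (Fin d)}, u ⊆ v → val u ≤ val v := by
    intro u v huv
    exact my_variance_condexp_mono (mGen_mono x huv) (hle v) hY2
  constructor
  · intro j
    unfold shapley
    refine mul_nonneg (inv_nonneg.2 (Nat.cast_nonneg _)) (Finset.sum_nonneg fun u hu => ?_)
    refine mul_nonneg (inv_nonneg.2 (Nat.cast_nonneg _)) (sub_nonneg.2 ?_)
    exact hmono (Finset.subset_insert j u)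
  · have hempty : val ∅ = 0 := by
      rw [hval]
      simp only [mGen_empty, condExp_bot]
      exact my_variance_const _
    have huniv : val Finset.univ = variance Y μ := by
      haveI : SigmaFinite (μ.trim (hle Finset.univ)) := by infer_instance
      rw [hval]
      simp only []
      rw [condExp_of_stronglyMeasurable (hle Finset.univ) hYmeas.stronglyMeasurable
        (hY2.integrable one_le_two)]
    rcases Nat.eq_zero_or_pos d with hd | hd
    · subst hd
      rw [Finset.univ_eq_empty (α := Fin 0), Finset.sum_empty]
      rw [show (Finset.univ : Finset (Fin 0)) = ∅ from Finset.univ_eq_empty] at huniv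
      rw [← huniv, hempty]
    · rw [shapley_sum hd val, hempty, huniv, sub_zero]
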